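/- Under the same hypotheses, the germ G_A admits the equivalent characterization: G_A = {(k_L,k_R) ∈ [a_L,c_L]×[a_R,c_R] : H_R(k_R)=H_L(k_L) ≥ A and (H_R(k_R)=A or H_R(k_R)=H_R⁻(k_R) or H_L(k_L)=H_L⁺(k_L))}. -/
import Mathlib


open Set

/-- Equivalent characterization of the germ $\mathcal G_A$. -/
theorem germ_characterization
    (aL bL cL aR bR cR δ A : ℝ)
    (HL HR : ℝ → ℝ)
    (haL : aL < bL) (hbL : bL < cL) (haR : aR < bR) (hbR : bR < cR)
    (hδ : 0 < δ)
    (hCL : ContDiffOn ℝ 2 HL (Icc aL cL)) (hCR : ContDiffOn ℝ 2 HR (Icc aR cR))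
    (hconvL : ∀ x ∈ Icc aL cL, δ ≤ deriv (deriv HL) x)
    (hconvR : ∀ x ∈ Icc aR cR, δ ≤ deriv (deriv HR) x)
    (hdecL : StrictAntiOn HL (Icc aL bL)) (hincL : StrictMonoOn HL (Icc bL cL))
    (hdecR : StrictAntiOn HR (Icc aR bR)) (hincR : StrictMonoOn HR (Icc bR cR))
    (h0La : HL aL = 0) (h0Lc : HL cL = 0) (h0Ra : HR aR = 0) (h0Rc : HR cR = 0)
    (hA : A ∈ Icc (max (HL bL) (HR bR)) 0)
    (GA : Set (ℝ × ℝ))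
    (hGA : GA = {k : ℝ × ℝ | k.1 ∈ Icc aL cL ∧ k.2 ∈ Icc aR cR ∧
        HR k.2 = HL k.1 ∧
        HL k.1 = max (max A (HL (max k.1 bL))) (HR (min k.2 bR))}) :
    GA = {k : ℝ × ℝ | k.1 ∈ Icc aL cL ∧ k.2 ∈ Icc aR cR ∧
      HR k.2 = HL k.1 ∧ A ≤ HR k.2 ∧
      (HR k.2 = A ∨ HR k.2 = HR (min k.2 bR) ∨ HL k.1 = HL (max k.1 bL))} := by

  subst hGA
  ext k
  obtain ⟨k1, k2⟩ := k
  simp only [mem_setOf_eq]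
  constructor
  · rintro ⟨h1, h2, heq, hmax⟩
    refine ⟨h1, h2, heq, ?_, ?_⟩
    · rw [heq, hmax]; exact le_trans (le_max_left _ _) (le_max_left _ _)
    · rcases max_cases (max A (HL (max k1 bL))) (HR (min k2 bR)) with ⟨h, _⟩ | ⟨h, _⟩
      · rw [h] at hmax
        rcases max_cases A (HL (max k1 bL)) with ⟨h', _⟩ | ⟨h', _⟩
        · left; rw [heq, hmax, h']
        · right; right; rw [hmax, h']
      · right; left; rw [heq, hmax, h]
  · rintro ⟨h1, h2, heq, hAle, hdisj⟩
    have hX : HL (max k1 bL) ≤ HL k1 := by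
      rcases le_or_gt bL k1 with h | h
      · rw [max_eq_left h]
      · rw [max_eq_right h.le]
        exact (hdecL ⟨h1.1, h.le⟩ ⟨haL.le, le_refl _⟩ h).le
    have hY : HR (min k2 bR) ≤ HR k2 := by
      rcases le_or_gt k2 bR with h | h
      · rw [min_eq_left h]
      · rw [min_eq_right h.le]
        exact (hincR ⟨le_refl _, hbR.le⟩ ⟨h.le, h2.2⟩ h).le
    refine ⟨h1, h2, heq, le_antisymm ?_ ?_⟩
    · rcases hdisj with h | h | h
      · exact le_trans (le_of_eq (heq.symm.trans h)) (le_trans (le_max_left _ _) (le_max_left _ _))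
      · exact le_trans (le_of_eq (heq.symm.trans h)) (le_max_right _ _)
      · exact le_trans (le_of_eq h) (le_trans (le_max_right _ _) (le_max_left _ _))
    · exact max_le (max_le (heq ▸ hAle) hX) (heq ▸ hY)
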